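/- Let S ⊂ ℝ² be the closed wedge {(r cos θ, r sin θ) : r ≥ 0, 0 ≤ θ ≤ ξ} with 0 < ξ < 2π, with boundary edges ∂S₁ (angle 0) and ∂S₂ (angle ξ). Let v₁, v₂ ∈ ℝ² and z : [0,T] → S continuous with z(s) ≠ 0 for s ∈ (0,T). Suppose y : [0,T] → ℝ² satisfies y(t) = v₁ u₁(t) + v₂ u₂(t) where u₁, u₂ are continuous nondecreasing functions such that u_j increases only at times t with z(t) ∈ ∂S_j (j = 1,2), i.e., the Stieltjes measure du_j gives zero mass to {t : z(t) ∉ ∂S_j}. Then for every t ∈ [0,T], V₁(y,[0,t]) = ‖v₁‖(u₁(t)−u₁(0)) + ‖v₂‖(u₂(t)−u₂(0)). -/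

import Mathlib

open Set Real

/-- Partition sums defining the strong `p`-variation of `f` on `E`. -/
def pVarSums {X : Type*} [SeminormedAddCommGroup X] (p : ℝ)
    (f : ℝ → X) (E : Set ℝ) : Set ℝ :=
  {s | ∃ n : ℕ, ∃ t : ℕ → ℝ, (∀ i ≤ n, t i ∈ E) ∧ (∀ i < n, t i ≤ t (i + 1)) ∧
    s = ∑ i ∈ Finset.range n, ‖f (t (i + 1)) - f (t i)‖ ^ p}

/-- The closed wedge `S` of angle `ξ` in `ℝ²` (polar coordinates). -/
def wedge (ξ : ℝ) : Set (EuclideanSpace ℝ (Fin 2)) :=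
  {z | ∃ r θ : ℝ, 0 ≤ r ∧ 0 ≤ θ ∧ θ ≤ ξ ∧ z 0 = r * Real.cos θ ∧ z 1 = r * Real.sin θ}

/-- The boundary edge `∂S₁` at angle `0`. -/
def edge1 : Set (EuclideanSpace ℝ (Fin 2)) :=
  {z | ∃ r : ℝ, 0 ≤ r ∧ z 0 = r ∧ z 1 = 0}

/-- The boundary edge `∂S₂` at angle `ξ`. -/
def edge2 (ξ : ℝ) : Set (EuclideanSpace ℝ (Fin 2)) :=
  {z | ∃ r : ℝ, 0 ≤ r ∧ z 0 = r * Real.cos ξ ∧ z 1 = r * Real.sin ξ}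

open Filter

lemma edge1_iff (z : EuclideanSpace ℝ (Fin 2)) :
    z ∈ edge1 ↔ z 1 = 0 ∧ 0 ≤ z 0 := by
  constructor
  · rintro ⟨r, hr, h0, h1⟩; exact ⟨h1, h0 ▸ hr⟩
  · rintro ⟨h1, h0⟩; exact ⟨z 0, h0, rfl, h1⟩

lemma edge2_iff (ξ : ℝ) (z : EuclideanSpace ℝ (Fin 2)) :
    z ∈ edge2 ξ ↔ z 0 * Real.sin ξ = z 1 * Real.cos ξ ∧
      0 ≤ z 0 * Real.cos ξ + z 1 * Real.sin ξ := by
  have hsc := Real.sin_sq_add_cos_sq ξ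
  constructor
  · rintro ⟨r, hr, h0, h1⟩
    constructor
    · rw [h0, h1]; ring
    · rw [h0, h1]; nlinarith
  · rintro ⟨he, hr⟩
    refine ⟨z 0 * Real.cos ξ + z 1 * Real.sin ξ, hr, ?_, ?_⟩
    · linear_combination Real.sin ξ * he - z 0 * hsc
    · linear_combination (-Real.cos ξ) * he - z 1 * hsc

lemma isClosed_edge1 : IsClosed edge1 := by
  have : edge1 = {z : EuclideanSpace ℝ (Fin 2) | z 1 = 0 ∧ 0 ≤ z 0} := by
    ext z; exact edge1_iff z
  rw [this]
  exact (isClosed_eq (EuclideanSpace.proj (1 : Fin 2)).continuous continuous_const).inter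
    (isClosed_le continuous_const (EuclideanSpace.proj (0 : Fin 2)).continuous)

lemma isClosed_edge2 (ξ : ℝ) : IsClosed (edge2 ξ) := by
  have : edge2 ξ = {z : EuclideanSpace ℝ (Fin 2) | z 0 * Real.sin ξ = z 1 * Real.cos ξ ∧
      0 ≤ z 0 * Real.cos ξ + z 1 * Real.sin ξ} := by
    ext z; exact edge2_iff ξ z
  rw [this]
  exact (isClosed_eq ((EuclideanSpace.proj (0 : Fin 2)).continuous.mul continuous_const)
      ((EuclideanSpace.proj (1 : Fin 2)).continuous.mul continuous_const)).inter
    (isClosed_le continuous_const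
      (((EuclideanSpace.proj (0 : Fin 2)).continuous.mul continuous_const).add
        ((EuclideanSpace.proj (1 : Fin 2)).continuous.mul continuous_const)))

lemma not_both {ξ : ℝ} (hξ0 : 0 < ξ) (hξ : ξ < 2 * π) (w : EuclideanSpace ℝ (Fin 2))
    (hw : w ≠ 0) : w ∉ edge1 ∨ w ∉ edge2 ξ := by
  by_contra h
  push_neg at h
  obtain ⟨h1, h2⟩ := h
  rw [edge1_iff] at h1
  obtain ⟨hz1, hz0⟩ := h1
  have hz0' : 0 < w 0 := by
    rcases hz0.lt_or_eq with h | h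
    · exact h
    · exfalso; apply hw; ext i; fin_cases i
      · exact h.symm
      · exact hz1
  obtain ⟨r, hr, h20, h21⟩ := h2
  have hrpos : 0 < r := by
    rcases hr.lt_or_eq with h | h
    · exact h
    · exfalso; rw [← h, zero_mul] at h20; linarith
  have hsin : Real.sin ξ = 0 := by
    rw [hz1] at h21
    rcases mul_eq_zero.mp h21.symm with h | h
    · linarith
    · exact h
  obtain ⟨n, hn⟩ := Real.sin_eq_zero_iff.mp hsin
  have hpi := Real.pi_pos
  have hn1 : (n : ℝ) = 1 := by
    have h1 : (0:ℝ) < n := by nlinarith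
    have h2 : (n:ℝ) < 2 := by nlinarith
    have ha : (0:ℤ) < n := by exact_mod_cast h1
    have hb : n < 2 := by exact_mod_cast h2
    have : n = 1 := by omega
    rw [this]; norm_num
  have : ξ = π := by rw [← hn, hn1, one_mul]
  rw [this, Real.cos_pi] at h20
  nlinarith

/-- if `y = u₁ v₁ + u₂ v₂` with `u_j` continuous nondecreasing functions
increasing only when the continuous path `z` (which avoids the vertex on `(0,T)`)
is on the respective boundary edge of the wedge, then the total variation of `y` on
`[0,t]` is `‖v₁‖(u₁(t)-u₁(0)) + ‖v₂‖(u₂(t)-u₂(0))`. -/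
theorem stmt5 (ξ : ℝ) (hξ0 : 0 < ξ) (hξ : ξ < 2 * π) (T : ℝ) (hT : 0 < T)
    (v₁ v₂ : EuclideanSpace ℝ (Fin 2))
    (z y : ℝ → EuclideanSpace ℝ (Fin 2)) (u₁ u₂ : ℝ → ℝ)
    (hzc : ContinuousOn z (Set.Icc 0 T))
    (hzS : ∀ s ∈ Set.Icc (0 : ℝ) T, z s ∈ wedge ξ)
    (hz0 : ∀ s ∈ Set.Ioo (0 : ℝ) T, z s ≠ 0)
    (hu₁c : ContinuousOn u₁ (Set.Icc 0 T)) (hu₂c : ContinuousOn u₂ (Set.Icc 0 T))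
    (hu₁m : MonotoneOn u₁ (Set.Icc 0 T)) (hu₂m : MonotoneOn u₂ (Set.Icc 0 T))
    (hy : ∀ s ∈ Set.Icc (0 : ℝ) T, y s = u₁ s • v₁ + u₂ s • v₂)
    (hflat1 : ∀ a b : ℝ, 0 ≤ a → a ≤ b → b ≤ T →
      (∀ q ∈ Set.Ioo a b, z q ∉ edge1) →
      ∀ s ∈ Set.Ioo a b, ∀ t ∈ Set.Ioo a b, u₁ s = u₁ t)
    (hflat2 : ∀ a b : ℝ, 0 ≤ a → a ≤ b → b ≤ T →
      (∀ q ∈ Set.Ioo a b, z q ∉ edge2 ξ) →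
      ∀ s ∈ Set.Ioo a b, ∀ t ∈ Set.Ioo a b, u₂ s = u₂ t)
    (t : ℝ) (ht : t ∈ Set.Icc (0 : ℝ) T) :
    sSup (pVarSums 1 y (Set.Icc 0 t)) =
      ‖v₁‖ * (u₁ t - u₁ 0) + ‖v₂‖ * (u₂ t - u₂ 0) := by
  obtain ⟨ht0, htT⟩ := ht
  set W : ℝ → ℝ := fun s => ‖v₁‖ * (u₁ s - u₁ 0) + ‖v₂‖ * (u₂ s - u₂ 0) with hW
  have h0mem : (0:ℝ) ∈ Icc (0:ℝ) T := ⟨le_refl 0, hT.le⟩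
  have htmem : t ∈ Icc (0:ℝ) T := ⟨ht0, htT⟩
  have hW0 : W 0 = 0 := by simp [hW]
  have hWmono : ∀ a ∈ Icc (0:ℝ) T, ∀ b ∈ Icc (0:ℝ) T, a ≤ b → W a ≤ W b := by
    intro a ha b hb hab
    have h1 := hu₁m ha hb hab
    have h2 := hu₂m ha hb hab
    have n1 := norm_nonneg v₁
    have n2 := norm_nonneg v₂
    simp only [hW]
    nlinarith
  have hstep : ∀ a ∈ Icc (0:ℝ) T, ∀ b ∈ Icc (0:ℝ) T, a ≤ b → ‖y b - y a‖ ≤ W b - W a := by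
    intro a ha b hb hab
    rw [hy b hb, hy a ha]
    have hd : u₁ b • v₁ + u₂ b • v₂ - (u₁ a • v₁ + u₂ a • v₂)
        = (u₁ b - u₁ a) • v₁ + (u₂ b - u₂ a) • v₂ := by module
    rw [hd]
    have h1 := hu₁m ha hb hab
    have h2 := hu₂m ha hb hab
    calc ‖(u₁ b - u₁ a) • v₁ + (u₂ b - u₂ a) • v₂‖
        ≤ ‖(u₁ b - u₁ a) • v₁‖ + ‖(u₂ b - u₂ a) • v₂‖ := norm_add_le _ _
      _ = |u₁ b - u₁ a| * ‖v₁‖ + |u₂ b - u₂ a| * ‖v₂‖ := by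
          rw [norm_smul, norm_smul, Real.norm_eq_abs, Real.norm_eq_abs]
      _ = W b - W a := by
          rw [abs_of_nonneg (by linarith), abs_of_nonneg (by linarith)]
          simp only [hW]; ring
  have hub : ∀ x ∈ pVarSums 1 y (Set.Icc 0 t), x ≤ W t := by
    rintro x ⟨n, p, hmem, hmono, rfl⟩
    have hsub : ∀ i ≤ n, p i ∈ Icc (0:ℝ) T :=
      fun i hi => ⟨(hmem i hi).1, le_trans (hmem i hi).2 htT⟩
    calc ∑ i ∈ Finset.range n, ‖y (p (i + 1)) - y (p i)‖ ^ (1:ℝ)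
        ≤ ∑ i ∈ Finset.range n, (W (p (i + 1)) - W (p i)) := by
          refine Finset.sum_le_sum fun i hi => ?_
          have hi' := Finset.mem_range.mp hi
          rw [Real.rpow_one]
          exact hstep _ (hsub i hi'.le) _ (hsub (i+1) hi') (hmono i hi')
      _ = W (p n) - W (p 0) := Finset.sum_range_sub (fun i => W (p i)) n
      _ ≤ W t := by
          have h1 : W (p n) ≤ W t := hWmono _ (hsub n le_rfl) _ htmem (hmem n le_rfl).2
          have h2 : W 0 ≤ W (p 0) := hWmono _ h0mem _ (hsub 0 n.zero_le) (hmem 0 n.zero_le).1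
          rw [hW0] at h2; linarith
  have hWt0 : 0 ≤ W t := hW0 ▸ hWmono 0 h0mem t htmem ht0
  have hbdd : BddAbove (pVarSums 1 y (Set.Icc 0 t)) := ⟨W t, fun x hx => hub x hx⟩
  have hmem0 : (0:ℝ) ∈ pVarSums 1 y (Set.Icc 0 t) :=
    ⟨0, fun _ => 0, fun i _ => ⟨le_refl 0, ht0⟩, fun i hi => absurd hi (Nat.not_lt_zero i),
      by simp⟩
  have main : sSup (pVarSums 1 y (Set.Icc 0 t)) = W t := by
    refine le_antisymm (Real.sSup_le hub hWt0) ?_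
    rcases ht0.eq_or_lt with h0t | h0t
    · have hWt : W t = 0 := by rw [← h0t]; exact hW0
      rw [hWt]
      exact le_csSup hbdd hmem0
    -- lower bound, t > 0
    have hchain : ∀ a b : ℝ, 0 < a → a ≤ b → b < t →
        W b - W a ∈ pVarSums 1 y (Set.Icc 0 t) := by
      intro a b ha hab hbt
      have hbT : b < T := lt_of_lt_of_le hbt htT
      have good : ∀ c ∈ Icc a b, ∃ η : ℝ, 0 < η ∧
          ∀ s ∈ Ioo (c - η) (c + η), ∀ r ∈ Ioo (c - η) (c + η), s ≤ r →
            ‖y r - y s‖ = W r - W s := by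
        intro c hc
        have hc0 : 0 < c := lt_of_lt_of_le ha hc.1
        have hcT : c < T := lt_of_le_of_lt hc.2 hbT
        have hzcne : z c ≠ 0 := hz0 c ⟨hc0, hcT⟩
        have hca : ContinuousAt z c := hzc.continuousAt (Icc_mem_nhds hc0 hcT)
        rcases not_both hξ0 hξ (z c) hzcne with hnot | hnot
        · have hev : ∀ᶠ q in nhds c, z q ∉ edge1 :=
            hca.eventually_mem (isClosed_edge1.isOpen_compl.mem_nhds hnot)
          rw [Metric.eventually_nhds_iff] at hev
          obtain ⟨ε, hε, hball⟩ := hev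
          set η := min ε (min c (T - c)) with hηdef
          have hη0 : 0 < η := lt_min hε (lt_min hc0 (by linarith))
          refine ⟨η, hη0, ?_⟩
          have hη1 : η ≤ ε := min_le_left _ _
          have hη2 : η ≤ c := le_trans (min_le_right _ _) (min_le_left _ _)
          have hη3 : η ≤ T - c := le_trans (min_le_right _ _) (min_le_right _ _)
          intro s hs r hr hsr
          have hsIcc : s ∈ Icc (0:ℝ) T := ⟨by linarith [hs.1], by linarith [hs.2]⟩
          have hrIcc : r ∈ Icc (0:ℝ) T := ⟨by linarith [hr.1], by linarith [hr.2]⟩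
          have hconst : u₁ s = u₁ r :=
            hflat1 (c - η) (c + η) (by linarith) (by linarith) (by linarith)
              (fun q hq => hball (by rw [Real.dist_eq, abs_lt]
                                     constructor <;> [linarith [hq.1]; linarith [hq.2]]))
              s hs r hr
          rw [hy r hrIcc, hy s hsIcc]
          have hyd : u₁ r • v₁ + u₂ r • v₂ - (u₁ s • v₁ + u₂ s • v₂)
              = (u₂ r - u₂ s) • v₂ := by rw [← hconst]; module
          rw [hyd, norm_smul, Real.norm_eq_abs,
            abs_of_nonneg (sub_nonneg.mpr (hu₂m hsIcc hrIcc hsr))]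
          simp only [hW]
          rw [← hconst]; ring
        · have hev : ∀ᶠ q in nhds c, z q ∉ edge2 ξ :=
            hca.eventually_mem ((isClosed_edge2 ξ).isOpen_compl.mem_nhds hnot)
          rw [Metric.eventually_nhds_iff] at hev
          obtain ⟨ε, hε, hball⟩ := hev
          set η := min ε (min c (T - c)) with hηdef
          have hη0 : 0 < η := lt_min hε (lt_min hc0 (by linarith))
          refine ⟨η, hη0, ?_⟩
          have hη1 : η ≤ ε := min_le_left _ _
          have hη2 : η ≤ c := le_trans (min_le_right _ _) (min_le_left _ _)
          have hη3 : η ≤ T - c := le_trans (min_le_right _ _) (min_le_right _ _)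
          intro s hs r hr hsr
          have hsIcc : s ∈ Icc (0:ℝ) T := ⟨by linarith [hs.1], by linarith [hs.2]⟩
          have hrIcc : r ∈ Icc (0:ℝ) T := ⟨by linarith [hr.1], by linarith [hr.2]⟩
          have hconst : u₂ s = u₂ r :=
            hflat2 (c - η) (c + η) (by linarith) (by linarith) (by linarith)
              (fun q hq => hball (by rw [Real.dist_eq, abs_lt]
                                     constructor <;> [linarith [hq.1]; linarith [hq.2]]))
              s hs r hr
          rw [hy r hrIcc, hy s hsIcc]
          have hyd : u₁ r • v₁ + u₂ r • v₂ - (u₁ s • v₁ + u₂ s • v₂)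
              = (u₁ r - u₁ s) • v₁ := by rw [← hconst]; module
          rw [hyd, norm_smul, Real.norm_eq_abs,
            abs_of_nonneg (sub_nonneg.mpr (hu₁m hsIcc hrIcc hsr))]
          simp only [hW]
          rw [← hconst]; ring
      choose! η hηpos hgood using good
      have hcover : Icc a b ⊆ ⋃ c : Icc a b, Ioo ((c:ℝ) - η c) ((c:ℝ) + η c) := by
        intro x hx
        refine mem_iUnion.mpr ⟨⟨x, hx⟩, ?_⟩
        have := hηpos x hx
        exact ⟨by linarith, by linarith⟩
      obtain ⟨δL, hδL, hLeb⟩ :=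
        lebesgue_number_lemma_of_metric isCompact_Icc (fun _ => isOpen_Ioo) hcover
      obtain ⟨N, hN⟩ := exists_nat_gt ((b - a) / δL)
      have hN0 : 0 < N := by
        have h1 : (0:ℝ) ≤ (b - a) / δL := div_nonneg (by linarith) hδL.le
        have : (0:ℝ) < N := lt_of_le_of_lt h1 hN
        exact_mod_cast this
      have hNne : (N:ℝ) ≠ 0 := by positivity
      set st := (b - a) / N with hstdef
      have hst0 : 0 ≤ st := div_nonneg (by linarith) (Nat.cast_nonneg N)
      have hstδ : st < δL := by
        rw [hstdef, div_lt_iff₀ (by exact_mod_cast hN0)]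
        rw [div_lt_iff₀ hδL] at hN
        nlinarith
      set p : ℕ → ℝ := fun i => a + i * st with hpdef
      have hmemab : ∀ i ≤ N, p i ∈ Icc a b := by
        intro i hi
        have hi' : (i:ℝ) ≤ N := by exact_mod_cast hi
        have hi0 : (0:ℝ) ≤ i := Nat.cast_nonneg i
        constructor
        · simp only [hpdef]; nlinarith
        · simp only [hpdef]
          have hNst : (N:ℝ) * st = b - a := by
            rw [hstdef]; field_simp
          nlinarith
      have hstep' : ∀ i, p (i+1) - p i = st := by
        intro i; simp only [hpdef]; push_cast; ring
      have hpmono : ∀ i, p i ≤ p (i + 1) := by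
        intro i; have := hstep' i; linarith
      have hterm : ∀ i < N, ‖y (p (i+1)) - y (p i)‖ = W (p (i+1)) - W (p i) := by
        intro i hi
        obtain ⟨c, hc⟩ := hLeb (p i) (hmemab i hi.le)
        have h1 : p i ∈ Ioo ((c:ℝ) - η c) ((c:ℝ) + η c) := hc (Metric.mem_ball_self hδL)
        have h2 : p (i+1) ∈ Ioo ((c:ℝ) - η c) ((c:ℝ) + η c) := by
          apply hc
          rw [Metric.mem_ball, Real.dist_eq, hstep' i, abs_of_nonneg hst0]
          exact hstδ
        exact hgood c c.2 (p i) h1 (p (i+1)) h2 (hpmono i)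
      have hpN : p N = b := by
        simp only [hpdef, hstdef]; field_simp; ring
      have hp0 : p 0 = a := by simp [hpdef]
      refine ⟨N, p, fun i hi => ?_, fun i hi => hpmono i, ?_⟩
      · have hmi := hmemab i hi
        exact ⟨le_trans ha.le hmi.1, le_trans hmi.2 hbt.le⟩
      · calc W b - W a = W (p N) - W (p 0) := by rw [hpN, hp0]
          _ = ∑ i ∈ Finset.range N, (W (p (i+1)) - W (p i)) :=
              (Finset.sum_range_sub (fun i => W (p i)) N).symm
          _ = ∑ i ∈ Finset.range N, ‖y (p (i + 1)) - y (p i)‖ ^ (1:ℝ) := by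
              refine Finset.sum_congr rfl fun i hi => ?_
              rw [Real.rpow_one, hterm i (Finset.mem_range.mp hi)]
    have key : ∀ δ : ℝ, δ ∈ Ioo (0:ℝ) (t/2) →
        W (t - δ) - W δ ≤ sSup (pVarSums 1 y (Set.Icc 0 t)) := by
      intro δ hδ
      exact le_csSup hbdd
        (hchain δ (t - δ) hδ.1 (by linarith [hδ.2]) (by linarith [hδ.1]))
    have hWc : ContinuousOn W (Icc 0 T) := by
      rw [hW]
      exact (continuousOn_const.mul (hu₁c.sub continuousOn_const)).add
        (continuousOn_const.mul (hu₂c.sub continuousOn_const))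
    have ht1 : Tendsto (fun δ : ℝ => W δ) (nhdsWithin 0 (Ioi 0)) (nhds (W 0)) := by
      apply (hWc 0 h0mem).tendsto.comp
      rw [tendsto_nhdsWithin_iff]
      constructor
      · exact tendsto_id.mono_left nhdsWithin_le_nhds
      · filter_upwards [Ioo_mem_nhdsGT_of_mem ⟨le_refl (0:ℝ), hT⟩] with x hx
        exact ⟨hx.1.le, hx.2.le⟩
    have ht2 : Tendsto (fun δ : ℝ => W (t - δ)) (nhdsWithin 0 (Ioi 0)) (nhds (W t)) := by
      apply (hWc t htmem).tendsto.comp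
      rw [tendsto_nhdsWithin_iff]
      constructor
      · have h : Tendsto (fun δ : ℝ => t - δ) (nhds 0) (nhds (t - 0)) :=
          tendsto_const_nhds.sub tendsto_id
        rw [sub_zero] at h
        exact h.mono_left nhdsWithin_le_nhds
      · filter_upwards [Ioo_mem_nhdsGT_of_mem ⟨le_refl (0:ℝ), h0t⟩] with x hx
        exact ⟨by linarith [hx.2], by linarith [hx.1]⟩
    have hlim : Tendsto (fun δ : ℝ => W (t - δ) - W δ) (nhdsWithin 0 (Ioi 0))
        (nhds (W t - W 0)) := ht2.sub ht1
    rw [hW0, sub_zero] at hlim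
    refine le_of_tendsto hlim ?_
    have hhalf : (0:ℝ) ∈ Ico (0:ℝ) (t/2) := ⟨le_rfl, by linarith⟩
    filter_upwards [Ioo_mem_nhdsGT_of_mem hhalf] with δ hδ
    exact key δ hδ
  rw [main]
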